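/- Let h be an m×n ROCN matrix (m ≤ n). Let A_1,…,A_m be Hermitian operators on a finite-dimensional complex Hilbert space H_A and B_1,…,B_n Hermitian operators on a finite-dimensional complex Hilbert space H_B, all satisfying A_i² = 1 and B_j² = 1. Then the following exact operator identity (sum-of-squares decomposition) holds on H_A ⊗ H_B: n·(1⊗1) − Σ_{i=1}^m Σ_{j=1}^n h_{ij} A_i ⊗ B_j = (1/2) Σ_{j=1}^n N_j† N_j, where N_j = 1⊗1 − Σ_{i=1}^m h_{ij} A_i ⊗ B_j. -/
import Mathlib


open Matrix Kronecker Finset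

/-- An `m × n` real matrix `h` (with `m ≤ n`) is ROCN (row-orthogonal, column-normalized)
if all its rows are nonzero, its rows are pairwise orthogonal, and every column has
unit Euclidean norm. -/
def IsROCN {m n : ℕ} (h : Matrix (Fin m) (Fin n) ℝ) : Prop :=
  m ≤ n ∧
  (∀ i, ∃ j, h i j ≠ 0) ∧
  (∀ i k, i ≠ k → ∑ j, h i j * h k j = 0) ∧
  (∀ j, ∑ i, (h i j) ^ 2 = 1)

lemma kron_conjTranspose {dA dB : ℕ} (A : Matrix (Fin dA) (Fin dA) ℂ)
    (B : Matrix (Fin dB) (Fin dB) ℂ) : (A ⊗ₖ B)ᴴ = Aᴴ ⊗ₖ Bᴴ := by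
  ext ⟨i, j⟩ ⟨k, l⟩
  simp [Matrix.conjTranspose_apply, Matrix.kroneckerMap_apply, mul_comm]

/-- For an ROCN matrix `h` and Hermitian involutions `A i`, `B j`, the
sum-of-squares identity
`n·(1⊗1) − Σᵢⱼ hᵢⱼ Aᵢ ⊗ Bⱼ = (1/2) Σⱼ Nⱼᴴ Nⱼ` holds, where
`Nⱼ = 1⊗1 − Σᵢ hᵢⱼ Aᵢ ⊗ Bⱼ`. -/
theorem rocn_sos_decomposition {m n dA dB : ℕ}
    (h : Matrix (Fin m) (Fin n) ℝ) (hROCN : IsROCN h)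
    (A : Fin m → Matrix (Fin dA) (Fin dA) ℂ)
    (B : Fin n → Matrix (Fin dB) (Fin dB) ℂ)
    (hAH : ∀ i, (A i)ᴴ = A i) (hBH : ∀ j, (B j)ᴴ = B j)
    (hA2 : ∀ i, A i * A i = 1) (hB2 : ∀ j, B j * B j = 1)
    (N : Fin n → Matrix (Fin dA × Fin dB) (Fin dA × Fin dB) ℂ)
    (hN : ∀ j, N j = (1 : Matrix (Fin dA) (Fin dA) ℂ) ⊗ₖ (1 : Matrix (Fin dB) (Fin dB) ℂ)
          - ∑ i, (h i j : ℂ) • (A i ⊗ₖ B j)) :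
    (n : ℂ) • ((1 : Matrix (Fin dA) (Fin dA) ℂ) ⊗ₖ (1 : Matrix (Fin dB) (Fin dB) ℂ))
      - ∑ i, ∑ j, (h i j : ℂ) • (A i ⊗ₖ B j)
    = (1 / 2 : ℂ) • ∑ j, (N j)ᴴ * N j := by
  obtain ⟨hmn, hrow, horth, hcol⟩ := hROCN
  have hone : (1 : Matrix (Fin dA) (Fin dA) ℂ) ⊗ₖ (1 : Matrix (Fin dB) (Fin dB) ℂ)
      = (1 : Matrix (Fin dA × Fin dB) (Fin dA × Fin dB) ℂ) := Matrix.one_kronecker_one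
  set S : Fin n → Matrix (Fin dA × Fin dB) (Fin dA × Fin dB) ℂ :=
    fun j => ∑ i, (h i j : ℂ) • (A i ⊗ₖ B j) with hS
  -- S j is Hermitian
  have hSH : ∀ j, (S j)ᴴ = S j := by
    intro j
    simp only [hS, Matrix.conjTranspose_sum, Matrix.conjTranspose_smul,
      kron_conjTranspose, hAH, hBH]
    simp [Complex.star_def, Complex.conj_ofReal]
  have hNj : ∀ j, N j = 1 - S j := by
    intro j; rw [hN j, hone]
  have hNH : ∀ j, (N j)ᴴ = N j := by
    intro j
    rw [hNj j, Matrix.conjTranspose_sub, Matrix.conjTranspose_one, hSH]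
  -- the square of S j
  have hSsq : ∀ j, S j * S j
      = ∑ i, ∑ k, ((h i j * h k j : ℝ) : ℂ) • ((A i * A k) ⊗ₖ (1 : Matrix (Fin dB) (Fin dB) ℂ)) := by
    intro j
    rw [hS]
    rw [Finset.sum_mul_sum]
    refine Finset.sum_congr rfl fun i _ => Finset.sum_congr rfl fun k _ => ?_
    rw [smul_mul_smul_comm, ← Matrix.mul_kronecker_mul, hB2 j, Complex.ofReal_mul]
  -- sum of squares
  have hSS : ∑ j, S j * S j = (n : ℂ) • (1 : Matrix (Fin dA × Fin dB) (Fin dA × Fin dB) ℂ) := by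
    calc ∑ j, S j * S j
        = ∑ i, ∑ k, ((∑ j, h i j * h k j : ℝ) : ℂ) •
            ((A i * A k) ⊗ₖ (1 : Matrix (Fin dB) (Fin dB) ℂ)) := by
          rw [Finset.sum_congr rfl fun j _ => hSsq j, Finset.sum_comm]
          refine Finset.sum_congr rfl fun i _ => ?_
          rw [Finset.sum_comm]
          refine Finset.sum_congr rfl fun k _ => ?_
          rw [← Finset.sum_smul, Complex.ofReal_sum]
      _ = ∑ i, ((∑ j, h i j * h i j : ℝ) : ℂ) •
            ((A i * A i) ⊗ₖ (1 : Matrix (Fin dB) (Fin dB) ℂ)) := by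
          refine Finset.sum_congr rfl fun i _ => ?_
          refine Finset.sum_eq_single i (fun k _ hk => ?_) (fun hin => absurd (Finset.mem_univ i) hin)
          rw [horth i k (Ne.symm hk)]
          simp
      _ = ((∑ i, ∑ j, h i j ^ 2 : ℝ) : ℂ) • (1 : Matrix (Fin dA × Fin dB) (Fin dA × Fin dB) ℂ) := by
          rw [Complex.ofReal_sum, Finset.sum_smul]
          refine Finset.sum_congr rfl fun i _ => ?_
          rw [hA2 i, hone]
          congr 1
          push_cast
          refine Finset.sum_congr rfl fun j _ => ?_
          ring
      _ = (n : ℂ) • (1 : Matrix (Fin dA × Fin dB) (Fin dA × Fin dB) ℂ) := by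
          rw [Finset.sum_comm]
          norm_num [hcol]
  -- expand N j ᴴ N j
  have hexp : ∑ j, (N j)ᴴ * N j
      = (2 * n : ℂ) • (1 : Matrix (Fin dA × Fin dB) (Fin dA × Fin dB) ℂ) - (2 : ℂ) • ∑ j, S j := by
    have : ∀ j, (N j)ᴴ * N j = 1 - ((2 : ℂ) • S j - S j * S j) := by
      intro j
      rw [hNH j, hNj j]
      rw [sub_mul, one_mul, mul_sub, mul_one]
      rw [two_smul]
      abel
    rw [Finset.sum_congr rfl fun j _ => this j]
    rw [Finset.sum_sub_distrib, Finset.sum_sub_distrib, Finset.sum_const,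
      Finset.card_univ, Fintype.card_fin, ← Finset.smul_sum, hSS]
    rw [Nat.cast_smul_eq_nsmul ℂ (n : ℕ) _ |>.symm]
    rw [two_mul]
    module
  -- finish
  rw [hone, hexp, Finset.sum_comm]
  rw [← hS]  -- make ∑ j, ∑ i ... into ∑ j, S j ? S is the fun; need to recognize
  rw [smul_sub, smul_smul, smul_smul]
  norm_num
  module
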